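/- Let m, N be positive integers, let A ∈ ℝ^{m×N}, b ∈ ℝ^m, let W ∈ ℝ^{m×m} be symmetric positive definite, let γ > 0, v ∈ ℝ^N, β ∈ ℝ, and suppose M = A^T W A is symmetric positive definite with R = M^{−1}. Let Λ̂ = 1_N + R A^T W b be the batch weighted least-squares estimate. Form the augmented data A' by appending the row v^T to A, b' by appending β to b, and W' as the block-diagonal matrix with blocks γW and 1, and set M' = A'^T W' A' (which is invertible) with R' = M'^{−1}. Then the recursively updated estimate Λ̂' := Λ̂ + R' v (β − v^T (Λ̂ − 1_N)) satisfies Λ̂' = 1_N + R' A'^T W' b'; that is, the recursive update reproduces the batch weighted least-squares estimate on the augmented data. -/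

import Mathlib

open Matrix

/-- Correctness of the recursive weighted least-squares update: starting
from the batch WLS estimate `Λ̂ = 1_N + R Aᵀ W b` (with `M = AᵀWA` positive definite,
`R = M⁻¹`), appending the new measurement pair `(v, β)` with forgetting factor `γ > 0`
(i.e. `A'` appends row `vᵀ` to `A`, `b'` appends `β` to `b`, `W' = diag(γW, 1)`), the
matrix `M' = A'ᵀ W' A'` is invertible, and with `R' = M'⁻¹` the recursive update
`Λ̂' = Λ̂ + R' v (β − vᵀ(Λ̂ − 1_N))` equals the batch estimate `1_N + R' A'ᵀ W' b'`. -/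
theorem stmt7 (m N : ℕ) (hm : 0 < m) (hN : 0 < N)
    (A : Matrix (Fin m) (Fin N) ℝ) (b : Fin m → ℝ)
    (W : Matrix (Fin m) (Fin m) ℝ) (hW : W.PosDef)
    (γ : ℝ) (hγ : 0 < γ) (v : Fin N → ℝ) (β : ℝ)
    (M : Matrix (Fin N) (Fin N) ℝ) (hMdef : M = Aᵀ * W * A) (hM : M.PosDef)
    (R : Matrix (Fin N) (Fin N) ℝ) (hR : R = M⁻¹)
    (Λhat : Fin N → ℝ)
    (hΛhat : Λhat = (fun _ => (1 : ℝ)) + R *ᵥ (Aᵀ *ᵥ (W *ᵥ b)))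
    (A' : Matrix (Fin (m + 1)) (Fin N) ℝ)
    (hA'c : ∀ (i : Fin m) (j : Fin N), A' i.castSucc j = A i j)
    (hA'l : ∀ j : Fin N, A' (Fin.last m) j = v j)
    (b' : Fin (m + 1) → ℝ)
    (hb'c : ∀ i : Fin m, b' i.castSucc = b i)
    (hb'l : b' (Fin.last m) = β)
    (W' : Matrix (Fin (m + 1)) (Fin (m + 1)) ℝ)
    (hW'c : ∀ i j : Fin m, W' i.castSucc j.castSucc = γ * W i j)
    (hW'cl : ∀ i : Fin m, W' i.castSucc (Fin.last m) = 0)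
    (hW'lc : ∀ j : Fin m, W' (Fin.last m) j.castSucc = 0)
    (hW'll : W' (Fin.last m) (Fin.last m) = 1)
    (M' : Matrix (Fin N) (Fin N) ℝ) (hM'def : M' = A'ᵀ * W' * A')
    (R' : Matrix (Fin N) (Fin N) ℝ) (hR' : R' = M'⁻¹)
    (Λhat' : Fin N → ℝ)
    (hΛhat' : Λhat' = Λhat + (β - v ⬝ᵥ (Λhat - fun _ => (1 : ℝ))) • (R' *ᵥ v)) :
    IsUnit M'.det ∧
      Λhat' = (fun _ => (1 : ℝ)) + R' *ᵥ (A'ᵀ *ᵥ (W' *ᵥ b')) := by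
  -- Structure of the augmented normal matrix
  have hM'eq : M' = γ • M + vecMulVec v v := by
    rw [hM'def, hMdef]
    ext i j
    simp only [Matrix.mul_apply, Matrix.transpose_apply, Matrix.add_apply,
      Matrix.smul_apply, Matrix.vecMulVec_apply, smul_eq_mul,
      Fin.sum_univ_castSucc, hA'c, hA'l, hW'c, hW'cl, hW'lc, hW'll,
      mul_zero, zero_mul, Finset.sum_const_zero, add_zero, zero_add, mul_one]
    rw [Finset.mul_sum]
    congr 1
    apply Finset.sum_congr rfl
    intro l _
    rw [Finset.sum_mul, Finset.sum_mul, Finset.mul_sum]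
    exact Finset.sum_congr rfl fun k _ => by ring
  -- Structure of the augmented right-hand side
  have hc' : A'ᵀ *ᵥ (W' *ᵥ b') = γ • (Aᵀ *ᵥ (W *ᵥ b)) + β • v := by
    funext i
    simp only [Matrix.mulVec, dotProduct, Matrix.transpose_apply, Pi.add_apply,
      Pi.smul_apply, smul_eq_mul, Fin.sum_univ_castSucc, hA'c, hA'l, hb'c, hb'l,
      hW'c, hW'cl, hW'lc, hW'll, mul_zero, zero_mul, Finset.sum_const_zero,
      add_zero, zero_add, mul_one, one_mul]
    rw [Finset.mul_sum]
    congr 1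
    · apply Finset.sum_congr rfl
      intro l _
      simp only [Finset.mul_sum]
      exact Finset.sum_congr rfl fun k _ => by ring
    · ring
  -- outer product action
  have houter : ∀ y : Fin N → ℝ, vecMulVec v v *ᵥ y = (v ⬝ᵥ y) • v := by
    intro y
    funext i
    simp only [Matrix.mulVec, dotProduct, Matrix.vecMulVec_apply, Pi.smul_apply,
      smul_eq_mul, Finset.sum_mul]
    exact Finset.sum_congr rfl fun k _ => by ring
  -- M' is positive definite
  have hM'pd : M'.PosDef := by
    rw [hM'eq]
    refine Matrix.posDef_iff_dotProduct_mulVec.mpr ⟨?_, ?_⟩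
    · ext i j
      simp only [Matrix.conjTranspose_apply, Matrix.add_apply, Matrix.smul_apply,
        Matrix.vecMulVec_apply, star_trivial, smul_eq_mul]
      have hsym : M j i = M i j := by
        have h1 := congrFun (congrFun hM.1 i) j
        simpa [Matrix.conjTranspose_apply] using h1
      rw [hsym]; ring
    · intro x hx
      have h1 : 0 < star x ⬝ᵥ (M *ᵥ x) := hM.dotProduct_mulVec_pos hx
      have h2 : star x ⬝ᵥ ((γ • M + vecMulVec v v) *ᵥ x)
          = γ * (star x ⬝ᵥ (M *ᵥ x)) + (v ⬝ᵥ x) * (v ⬝ᵥ x) := by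
        rw [Matrix.add_mulVec, dotProduct_add, houter]
        have hsm : (γ • M) *ᵥ x = γ • (M *ᵥ x) := by
          rw [Matrix.smul_mulVec]
        rw [hsm, dotProduct_smul, dotProduct_smul, smul_eq_mul, smul_eq_mul]
        congr 1
        simp [dotProduct, star_trivial, mul_comm]
      rw [h2]
      have h3 : 0 ≤ (v ⬝ᵥ x) * (v ⬝ᵥ x) := mul_self_nonneg _
      nlinarith
  have hM'unit : IsUnit M'.det := isUnit_iff_ne_zero.mpr (ne_of_gt hM'pd.det_pos)
  refine ⟨hM'unit, ?_⟩
  have hMunit : IsUnit M.det := isUnit_iff_ne_zero.mpr (ne_of_gt hM.det_pos)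
  set x := Aᵀ *ᵥ (W *ᵥ b) with hx
  have hd : Λhat - (fun _ => (1 : ℝ)) = R *ᵥ x := by
    rw [hΛhat]; abel
  have hMd : M *ᵥ (Λhat - fun _ => (1 : ℝ)) = x := by
    rw [hd, Matrix.mulVec_mulVec, hR, Matrix.mul_nonsing_inv M hMunit, Matrix.one_mulVec]
  have hR'M' : R' * M' = 1 := by
    rw [hR']; exact Matrix.nonsing_inv_mul M' hM'unit
  -- M' applied to the old residual
  have hM'd : M' *ᵥ (Λhat - fun _ => (1 : ℝ))
      = γ • x + (v ⬝ᵥ (Λhat - fun _ => (1 : ℝ))) • v := by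
    rw [hM'eq, Matrix.add_mulVec, houter, Matrix.smul_mulVec, hMd]
  have hrec : Λhat - (fun _ => (1 : ℝ)) = R' *ᵥ (M' *ᵥ (Λhat - fun _ => (1 : ℝ))) := by
    rw [Matrix.mulVec_mulVec, hR'M', Matrix.one_mulVec]
  rw [hc']
  set d : Fin N → ℝ := Λhat - fun _ => (1 : ℝ) with hdd
  set s : ℝ := β - v ⬝ᵥ d with hss
  have key : Λhat' = (fun _ => (1 : ℝ)) + (d + s • (R' *ᵥ v)) := by
    rw [hΛhat', hdd]; abel
  have harg : d + s • (R' *ᵥ v) = R' *ᵥ (γ • x + β • v) := by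
    calc d + s • (R' *ᵥ v) = R' *ᵥ (M' *ᵥ d) + R' *ᵥ (s • v) := by
          rw [← hrec, Matrix.mulVec_smul]
      _ = R' *ᵥ (M' *ᵥ d + s • v) := by rw [Matrix.mulVec_add]
      _ = R' *ᵥ (γ • x + β • v) := by
          rw [hM'd]
          congr 1
          rw [hss, sub_smul, add_assoc]
          abel
  rw [key, harg]
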